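/- arXiv:2006.01215 — 4 statements merged into one kernel-verified Lean document; each statement's English description precedes it below -/
import Mathlib

section
/- Let B be an n×n hermitian complex matrix (Bᴴ = B) that is block-diagonal with respect to f : Fin n → Fin ℓ. Then there exist a unitary matrix V (Vᴴ * V = 1) and a function g : Fin n → Fin ℓ such that: Vᴴ * B * V is a diagonal matrix; for each column index j, the j-th column of V is supported on block (g j); and for each k : Fin ℓ, the number of indices j with g j = k equals the number of indices i with f i = k. (Every hermitian block-diagonal matrix admits an orthonormal eigenbasis adapted to the blocks.) -/
open Matrix

/-- Extension of a matrix on a block to a full matrix, by zero. -/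
noncomputable def blockExt {n ℓ : ℕ} (f : Fin n → Fin ℓ) (k : Fin ℓ)
    (U : Matrix {i : Fin n // f i = k} {i : Fin n // f i = k} ℂ) :
    Matrix (Fin n) (Fin n) ℂ :=
  Matrix.of fun i j => if hi : f i = k then if hj : f j = k then U ⟨i, hi⟩ ⟨j, hj⟩ else 0 else 0

lemma blockExt_apply {n ℓ : ℕ} (f : Fin n → Fin ℓ) (k : Fin ℓ)
    (U : Matrix {i : Fin n // f i = k} {i : Fin n // f i = k} ℂ) {i j : Fin n}
    (hi : f i = k) (hj : f j = k) : blockExt f k U i j = U ⟨i, hi⟩ ⟨j, hj⟩ := by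
  simp [blockExt, hi, hj]

lemma blockExt_row0 {n ℓ : ℕ} (f : Fin n → Fin ℓ) (k : Fin ℓ)
    (U : Matrix {i : Fin n // f i = k} {i : Fin n // f i = k} ℂ) {i : Fin n} (j : Fin n)
    (hi : f i ≠ k) : blockExt f k U i j = 0 := by
  simp [blockExt, hi]

lemma blockExt_col0 {n ℓ : ℕ} (f : Fin n → Fin ℓ) (k : Fin ℓ)
    (U : Matrix {i : Fin n // f i = k} {i : Fin n // f i = k} ℂ) (i : Fin n) {j : Fin n}
    (hj : f j ≠ k) : blockExt f k U i j = 0 := by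
  simp [blockExt, hj]

lemma sum_of_support_block {n ℓ : ℕ} (f : Fin n → Fin ℓ) (k : Fin ℓ) (F : Fin n → ℂ)
    (hF : ∀ i, f i ≠ k → F i = 0) :
    ∑ i, F i = ∑ i : {i : Fin n // f i = k}, F i.1 := by
  classical
  have h1 : ∑ i ∈ Finset.univ.filter (fun i => f i = k), F i = ∑ i, F i :=
    Finset.sum_filter_of_ne (fun x _ hx => by
      by_contra h; exact hx (hF x h))
  rw [← h1]
  exact Finset.sum_subtype _ (by simp) F

/-- Every hermitian block-diagonal matrix admits an orthonormal eigenbasis adapted to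
the blocks. -/
theorem hermitian_blockDiag_adapted_eigenbasis
    {n ℓ : ℕ} (f : Fin n → Fin ℓ)
    (B : Matrix (Fin n) (Fin n) ℂ)
    (hherm : Bᴴ = B)
    (hB : ∀ i j, f i ≠ f j → B i j = 0) :
    ∃ (V : Matrix (Fin n) (Fin n) ℂ) (g : Fin n → Fin ℓ),
      Vᴴ * V = 1 ∧
      (∀ i j, i ≠ j → (Vᴴ * B * V) i j = 0) ∧
      (∀ j i, f i ≠ g j → V i j = 0) ∧
      (∀ k : Fin ℓ,
        (Finset.univ.filter fun j => g j = k).card =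
          (Finset.univ.filter fun i => f i = k).card) := by
  classical
  have hBk : ∀ k : Fin ℓ,
      (B.submatrix (Subtype.val : {i : Fin n // f i = k} → Fin n) Subtype.val).IsHermitian := by
    intro k
    unfold Matrix.IsHermitian
    rw [Matrix.conjTranspose_submatrix, hherm]
  set U : ∀ k : Fin ℓ, Matrix {i : Fin n // f i = k} {i : Fin n // f i = k} ℂ :=
    fun k => ((hBk k).eigenvectorUnitary : Matrix _ _ ℂ) with hU
  have hUu : ∀ k, (U k)ᴴ * U k = 1 := by
    intro k
    have := Matrix.mem_unitaryGroup_iff'.mp ((hBk k).eigenvectorUnitary).2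
    rwa [Matrix.star_eq_conjTranspose] at this
  have hUd : ∀ k, (U k)ᴴ * ((B.submatrix Subtype.val Subtype.val) * U k)
      = Matrix.diagonal (RCLike.ofReal ∘ (hBk k).eigenvalues) := by
    intro k
    conv_lhs => rw [(hBk k).spectral_theorem]
    rw [Unitary.conjStarAlgAut_apply, Matrix.star_eq_conjTranspose]
    simp only [← Matrix.mul_assoc]
    rw [hUu k, one_mul, Matrix.mul_assoc, hUu k, mul_one]
  set W : Fin ℓ → Matrix (Fin n) (Fin n) ℂ := fun k => blockExt f k (U k) with hWdef
  set V : Matrix (Fin n) (Fin n) ℂ := ∑ k, W k with hV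
  -- off-block products vanish
  have hWW : ∀ k k', k ≠ k' → (W k)ᴴ * W k' = 0 := by
    intro k k' hkk'
    ext j j'
    simp only [Matrix.mul_apply, Matrix.conjTranspose_apply, Matrix.zero_apply, hWdef]
    refine Finset.sum_eq_zero fun i _ => ?_
    by_cases hi : f i = k
    · rw [blockExt_row0 f k' (U k') j' (by rw [hi]; exact hkk'), mul_zero]
    · rw [blockExt_row0 f k (U k) j hi]; simp
  have hWBW : ∀ k k', k ≠ k' → (W k)ᴴ * (B * W k') = 0 := by
    intro k k' hkk'
    ext j j'
    simp only [Matrix.mul_apply, Matrix.conjTranspose_apply, Matrix.zero_apply, hWdef]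
    refine Finset.sum_eq_zero fun i _ => ?_
    by_cases hi : f i = k
    · have hz : (∑ i', B i i' * blockExt f k' (U k') i' j') = 0 := by
        refine Finset.sum_eq_zero fun i' _ => ?_
        by_cases hi' : f i' = k'
        · rw [hB i i' (by rw [hi, hi']; exact hkk'), zero_mul]
        · rw [blockExt_row0 f k' (U k') j' hi', mul_zero]
      rw [hz, mul_zero]
    · rw [blockExt_row0 f k (U k) j hi]; simp
  -- diagonal blocks
  have hWWk : ∀ k, (W k)ᴴ * W k
      = Matrix.diagonal (fun j => if f j = k then (1 : ℂ) else 0) := by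
    intro k
    ext j j'
    simp only [Matrix.mul_apply, Matrix.conjTranspose_apply, hWdef]
    by_cases hj : f j = k
    · by_cases hj' : f j' = k
      · calc ∑ i, star (blockExt f k (U k) i j) * blockExt f k (U k) i j'
            = ∑ i : {i : Fin n // f i = k},
                star (blockExt f k (U k) i.1 j) * blockExt f k (U k) i.1 j' :=
              sum_of_support_block f k _ (fun i hi => by
                rw [blockExt_row0 f k (U k) j hi]; simp)
          _ = ∑ i : {i : Fin n // f i = k}, (U k)ᴴ ⟨j, hj⟩ i * U k i ⟨j', hj'⟩ :=
              Finset.sum_congr rfl fun i _ => by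
                rw [blockExt_apply f k (U k) i.2 hj, blockExt_apply f k (U k) i.2 hj']
                rfl
          _ = ((U k)ᴴ * U k) ⟨j, hj⟩ ⟨j', hj'⟩ := (Matrix.mul_apply).symm
          _ = (1 : Matrix {i : Fin n // f i = k} {i : Fin n // f i = k} ℂ)
                ⟨j, hj⟩ ⟨j', hj'⟩ := by rw [hUu k]
          _ = Matrix.diagonal (fun j => if f j = k then (1 : ℂ) else 0) j j' := by
              rcases eq_or_ne j j' with rfl | hne
              · simp [Matrix.one_apply, hj]
              · have hne' : (⟨j, hj⟩ : {i : Fin n // f i = k}) ≠ ⟨j', hj'⟩ :=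
                  fun h => hne (congrArg Subtype.val h)
                rw [Matrix.one_apply_ne hne', Matrix.diagonal_apply_ne _ hne]
      · have hz : ∑ i, star (blockExt f k (U k) i j) * blockExt f k (U k) i j' = 0 :=
          Finset.sum_eq_zero fun i _ => by
            rw [blockExt_col0 f k (U k) i hj', mul_zero]
        rw [hz]
        rcases eq_or_ne j j' with rfl | hne
        · exact absurd hj hj'
        · rw [Matrix.diagonal_apply_ne _ hne]
    · have hz : ∑ i, star (blockExt f k (U k) i j) * blockExt f k (U k) i j' = 0 :=
        Finset.sum_eq_zero fun i _ => by
          rw [blockExt_col0 f k (U k) i hj]; simp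
      rw [hz]
      rcases eq_or_ne j j' with rfl | hne
      · rw [Matrix.diagonal_apply_eq]; simp [hj]
      · rw [Matrix.diagonal_apply_ne _ hne]
  have hWBWk : ∀ k (j j' : Fin n), j ≠ j' → ((W k)ᴴ * (B * W k)) j j' = 0 := by
    intro k j j' hjj
    simp only [Matrix.mul_apply, Matrix.conjTranspose_apply, hWdef]
    by_cases hj : f j = k
    · by_cases hj' : f j' = k
      · have hne' : (⟨j, hj⟩ : {i : Fin n // f i = k}) ≠ ⟨j', hj'⟩ :=
          fun h => hjj (congrArg Subtype.val h)
        have hd := Matrix.ext_iff.mpr (hUd k) ⟨j, hj⟩ ⟨j', hj'⟩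
        rw [Matrix.diagonal_apply_ne _ hne'] at hd
        simp only [Matrix.mul_apply, Matrix.conjTranspose_apply,
          Matrix.submatrix_apply] at hd
        rw [sum_of_support_block f k _ (fun i hi => by
          rw [blockExt_row0 f k (U k) j hi]; simp)]
        rw [← hd]
        refine Finset.sum_congr rfl fun i _ => ?_
        rw [blockExt_apply f k (U k) i.2 hj]
        refine congrArg₂ (· * ·) rfl ?_
        rw [sum_of_support_block f k _ (fun i' hi' => by
          rw [blockExt_row0 f k (U k) j' hi', mul_zero])]
        refine Finset.sum_congr rfl fun i' _ => ?_
        rw [blockExt_apply f k (U k) i'.2 hj']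
      · refine Finset.sum_eq_zero fun i _ => ?_
        have hz : (∑ i', B i i' * blockExt f k (U k) i' j') = 0 :=
          Finset.sum_eq_zero fun i' _ => by
            rw [blockExt_col0 f k (U k) i' hj', mul_zero]
        rw [hz, mul_zero]
    · refine Finset.sum_eq_zero fun i _ => ?_
      rw [blockExt_col0 f k (U k) i hj]; simp
  refine ⟨V, f, ?_, ?_, ?_, fun k => rfl⟩
  · -- V is unitary
    have expand : Vᴴ * V = ∑ k, ∑ k', (W k)ᴴ * W k' := by
      rw [hV, Matrix.conjTranspose_sum, Finset.sum_mul]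
      exact Finset.sum_congr rfl fun k _ => by rw [Finset.mul_sum]
    rw [expand,
      Finset.sum_congr rfl (fun k _ => Fintype.sum_eq_single k
        (fun k' hk' => hWW k k' (fun h => hk' h.symm))),
      Finset.sum_congr rfl (fun k _ => hWWk k)]
    ext j j'
    simp only [Matrix.sum_apply, Matrix.diagonal_apply, Matrix.one_apply]
    rcases eq_or_ne j j' with rfl | hne
    · simp
    · simp [hne]
  · -- diagonality
    intro j j' hjj
    have expand : Vᴴ * B * V = ∑ k, ∑ k', (W k)ᴴ * (B * W k') := by
      rw [hV, Matrix.conjTranspose_sum, Finset.sum_mul, Finset.sum_mul]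
      refine Finset.sum_congr rfl fun k _ => ?_
      rw [Finset.mul_sum]
      exact Finset.sum_congr rfl fun k' _ => by rw [Matrix.mul_assoc]
    rw [expand,
      Finset.sum_congr rfl (fun k _ => Fintype.sum_eq_single k
        (fun k' hk' => hWBW k k' (fun h => hk' h.symm))),
      Matrix.sum_apply]
    exact Finset.sum_eq_zero fun k _ => hWBWk k j j' hjj
  · -- column support
    intro j i hij
    rw [hV, Matrix.sum_apply]
    refine Finset.sum_eq_zero fun k _ => ?_
    simp only [hWdef]
    by_cases h : f j = k
    · exact blockExt_row0 f k (U k) j (h ▸ hij)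
    · exact blockExt_col0 f k (U k) i h
end

section
/- Let B be an n×n complex matrix that is diagonalizable (there exists an invertible matrix P with P⁻¹ * B * P diagonal) and block-diagonal with respect to f : Fin n → Fin ℓ. Then there exist an invertible matrix W and a function g : Fin n → Fin ℓ such that: W⁻¹ * B * W is diagonal; for each column index j, the j-th column of W is supported on block (g j); and for each k : Fin ℓ, the number of indices j with g j = k equals the number of indices i with f i = k. (Every diagonalizable block-diagonal matrix admits an eigenbasis adapted to the blocks.) -/
open Matrix

variable {n ℓ : ℕ}

/-- The submodule of vectors supported on block `k`. -/
noncomputable def blockSub (f : Fin n → Fin ℓ) (k : Fin ℓ) : Submodule ℂ (Fin n → ℂ) where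
  carrier := {v | ∀ i, f i ≠ k → v i = 0}
  add_mem' := by intro a b ha hb i hi; simp [ha i hi, hb i hi]
  zero_mem' := by intro i _; rfl
  smul_mem' := by intro c v hv i hi; simp [hv i hi]

lemma mem_blockSub {f : Fin n → Fin ℓ} {k : Fin ℓ} {v : Fin n → ℂ} :
    v ∈ blockSub f k ↔ ∀ i, f i ≠ k → v i = 0 := Iff.rfl

lemma blockSub_isInternal (f : Fin n → Fin ℓ) : DirectSum.IsInternal (blockSub f) := by
  classical
  rw [DirectSum.isInternal_submodule_iff_iSupIndep_and_iSup_eq_top]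
  constructor
  · intro k
    have hle : (⨆ (j) (_ : j ≠ k), blockSub f j) ≤
        { carrier := {v : Fin n → ℂ | ∀ i, f i = k → v i = 0}
          add_mem' := by intro a b ha hb i hi; simp [ha i hi, hb i hi]
          zero_mem' := by intro i _; rfl
          smul_mem' := by intro c v hv i hi; simp [hv i hi] } := by
      refine iSup₂_le fun j hj => ?_
      intro v hv i hik
      exact hv i (by rw [hik]; exact fun h => hj h.symm)
    refine Submodule.disjoint_def.mpr fun v hv hv' => ?_
    have hv'' := hle hv'
    funext i
    show v i = 0
    by_cases h : f i = k
    · exact hv'' i h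
    · exact hv i h
  · rw [eq_top_iff]
    intro v _
    have hv : v = ∑ k : Fin ℓ, (fun i => if f i = k then v i else 0) := by
      funext i
      rw [Finset.sum_apply]
      simp [Finset.sum_ite_eq]
    rw [hv]
    exact Submodule.sum_mem _ fun k _ =>
      Submodule.mem_iSup_of_mem k (fun i hi => if_neg hi)

/-- The block submodule is linearly equivalent to functions on the block. -/
noncomputable def blockSubEquiv (f : Fin n → Fin ℓ) (k : Fin ℓ) :
    blockSub f k ≃ₗ[ℂ] ({i : Fin n // f i = k} → ℂ) where
  toFun v i := v.1 i.1
  map_add' a b := rfl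
  map_smul' c v := rfl
  invFun u := ⟨fun i => if h : f i = k then u ⟨i, h⟩ else 0, fun i hi => dif_neg hi⟩
  left_inv v := by
    ext i
    by_cases h : f i = k
    · simp [h]
    · simp [h, v.2 i h]
  right_inv u := by ext i; simp [i.2]

lemma finrank_blockSub (f : Fin n → Fin ℓ) (k : Fin ℓ) :
    Module.finrank ℂ (blockSub f k) = (Finset.univ.filter fun i => f i = k).card := by
  classical
  rw [(blockSubEquiv f k).finrank_eq, Module.finrank_fintype_fun_eq_card,
    Fintype.card_subtype]
open Matrix
variable {n ℓ : ℕ}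

lemma blockdiag_mul {f : Fin n → Fin ℓ} {M N : Matrix (Fin n) (Fin n) ℂ}
    (hM : ∀ i j, f i ≠ f j → M i j = 0) (hN : ∀ i j, f i ≠ f j → N i j = 0) :
    ∀ i j, f i ≠ f j → (M * N) i j = 0 := by
  intro i j h
  rw [Matrix.mul_apply]
  refine Finset.sum_eq_zero fun x _ => ?_
  by_cases hx : f i = f x
  · rw [hN x j (hx ▸ h), mul_zero]
  · rw [hM i x hx, zero_mul]

lemma blockdiag_pow {f : Fin n → Fin ℓ} {M : Matrix (Fin n) (Fin n) ℂ}
    (hM : ∀ i j, f i ≠ f j → M i j = 0) (m : ℕ) :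
    ∀ i j, f i ≠ f j → (M ^ m) i j = 0 := by
  induction m with
  | zero => intro i j h; rw [pow_zero]; exact Matrix.one_apply_ne (fun hij => h (hij ▸ rfl))
  | succ m ih => rw [pow_succ]; exact blockdiag_mul ih hM

lemma blockdiag_aeval {f : Fin n → Fin ℓ} {M : Matrix (Fin n) (Fin n) ℂ}
    (hM : ∀ i j, f i ≠ f j → M i j = 0) (q : Polynomial ℂ) :
    ∀ i j, f i ≠ f j → (Polynomial.aeval M q) i j = 0 := by
  intro i j h
  rw [Polynomial.aeval_eq_sum_range]
  rw [Matrix.sum_apply]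
  refine Finset.sum_eq_zero fun m _ => ?_
  rw [Matrix.smul_apply, blockdiag_pow hM m i j h, smul_zero]

lemma conjPowAux {P Q D : Matrix (Fin n) (Fin n) ℂ} (hPQ : P * Q = 1) (hQP : Q * P = 1)
    (m : ℕ) : (P * D * Q) ^ m = P * D ^ m * Q := by
  induction m with
  | zero => simp [hPQ]
  | succ m ih =>
    rw [pow_succ, ih, pow_succ]
    calc P * D ^ m * Q * (P * D * Q) = P * D ^ m * (Q * P) * D * Q := by
          simp only [Matrix.mul_assoc]
      _ = P * (D ^ m * D) * Q := by rw [hQP]; simp only [Matrix.mul_assoc, Matrix.mul_one]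
      _ = _ := by simp only [Matrix.mul_assoc]

lemma conj_aeval {P Q D : Matrix (Fin n) (Fin n) ℂ} (hPQ : P * Q = 1) (hQP : Q * P = 1)
    (q : Polynomial ℂ) :
    Polynomial.aeval (P * D * Q) q = P * Polynomial.aeval D q * Q := by
  rw [Polynomial.aeval_eq_sum_range, Polynomial.aeval_eq_sum_range,
    Finset.mul_sum, Finset.sum_mul]
  refine Finset.sum_congr rfl fun m _ => ?_
  rw [conjPowAux hPQ hQP, Matrix.mul_smul, Matrix.smul_mul]

lemma aevalDiagonalAux (d : Fin n → ℂ) (q : Polynomial ℂ) :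
    Polynomial.aeval (Matrix.diagonal d) q = Matrix.diagonal (fun i => q.eval (d i)) := by
  have h1 : Matrix.diagonal d = Matrix.diagonalAlgHom (R := ℂ) d := rfl
  have h2 : Polynomial.aeval d q = fun i => q.eval (d i) := by
    funext i
    rw [show (Polynomial.aeval d q) i
        = Pi.evalAlgHom ℂ (fun _ : Fin n => ℂ) i (Polynomial.aeval d q) from rfl,
      ← Polynomial.aeval_algHom_apply]
    exact congrFun (Polynomial.coe_aeval_eq_eval (d i)) q
  rw [h1, Polynomial.aeval_algHom_apply, h2]
  rfl

/-- Basis of a submodule from an independent spanning set. -/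
noncomputable def spanBasis {V : Submodule ℂ (Fin n → ℂ)} {t : Set (Fin n → ℂ)}
    (hli : LinearIndependent ℂ ((↑) : t → (Fin n → ℂ))) (hsp : Submodule.span ℂ t = V) :
    Module.Basis t ℂ V :=
  (Module.Basis.span hli).map (LinearEquiv.ofEq _ _ (by rw [Subtype.range_coe, hsp]))

lemma spanBasis_coe {V : Submodule ℂ (Fin n → ℂ)} {t : Set (Fin n → ℂ)}
    (hli : LinearIndependent ℂ ((↑) : t → (Fin n → ℂ))) (hsp : Submodule.span ℂ t = V)
    (a : t) : (spanBasis hli hsp a : Fin n → ℂ) = a := by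
  simp [spanBasis, Module.Basis.span_apply]

/-- The fiber of the first projection of a sigma type. -/
def sigmaFiberFstEquiv {ι : Type*} {β : ι → Type*} (k : ι) :
    {a : Σ i, β i // a.1 = k} ≃ β k where
  toFun a := a.2 ▸ a.1.2
  invFun b := ⟨⟨k, b⟩, rfl⟩
  left_inv := by rintro ⟨⟨i, b⟩, rfl⟩; rfl
  right_inv b := rfl

/-- Every diagonalizable block-diagonal matrix admits an eigenbasis adapted to the blocks. -/
theorem diagonalizable_blockDiag_adapted_eigenbasis
    {n ℓ : ℕ} (f : Fin n → Fin ℓ)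
    (B : Matrix (Fin n) (Fin n) ℂ)
    (hdiag : ∃ P : Matrix (Fin n) (Fin n) ℂ, IsUnit P ∧
      ∀ i j, i ≠ j → (P⁻¹ * B * P) i j = 0)
    (hB : ∀ i j, f i ≠ f j → B i j = 0) :
    ∃ (W : Matrix (Fin n) (Fin n) ℂ) (g : Fin n → Fin ℓ),
      IsUnit W ∧
      (∀ i j, i ≠ j → (W⁻¹ * B * W) i j = 0) ∧
      (∀ j i, f i ≠ g j → W i j = 0) ∧
      (∀ k : Fin ℓ,
        (Finset.univ.filter fun j => g j = k).card =
          (Finset.univ.filter fun i => f i = k).card) := by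
  classical
  obtain ⟨P, hP, hPD⟩ := hdiag
  have hPdet : IsUnit P.det := (Matrix.isUnit_iff_isUnit_det P).mp hP
  have hPQ : P * P⁻¹ = 1 := Matrix.mul_nonsing_inv P hPdet
  have hQP : P⁻¹ * P = 1 := Matrix.nonsing_inv_mul P hPdet
  set d : Fin n → ℂ := fun i => (P⁻¹ * B * P) i i with hd
  have hD : P⁻¹ * B * P = Matrix.diagonal d := by
    ext i j
    by_cases h : i = j
    · subst h; simp [hd]
    · rw [hPD i j h, Matrix.diagonal_apply_ne _ h]
  have hBconj : B = P * Matrix.diagonal d * P⁻¹ := by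
    rw [← hD]
    calc B = (P * P⁻¹) * B * (P * P⁻¹) := by rw [hPQ, Matrix.one_mul, Matrix.mul_one]
      _ = P * (P⁻¹ * B * P) * P⁻¹ := by simp only [Matrix.mul_assoc]
  set S : Finset ℂ := Finset.image d Finset.univ with hS
  set q : ℂ → Polynomial ℂ :=
    fun μ => Lagrange.interpolate S id (fun ν => if ν = μ then 1 else 0) with hq
  have hdS : ∀ i, d i ∈ S := fun i => Finset.mem_image_of_mem d (Finset.mem_univ i)
  have hqeval : ∀ μ, ∀ i : Fin n, (q μ).eval (d i) = if d i = μ then 1 else 0 := by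
    intro μ i
    have h := Lagrange.eval_interpolate_at_node (fun ν : ℂ => if ν = μ then (1:ℂ) else 0)
      (Set.injOn_id _) (hdS i)
    simpa [hq] using h
  set E : ℂ → Matrix (Fin n) (Fin n) ℂ :=
    fun μ => P * Matrix.diagonal (fun i => if d i = μ then 1 else 0) * P⁻¹ with hE
  have hEq : ∀ μ, Polynomial.aeval B (q μ) = E μ := by
    intro μ
    rw [hBconj, conj_aeval hPQ hQP, aevalDiagonalAux]
    simp only [hE]
    refine congrArg (fun M => P * M * P⁻¹) ?_
    rw [Matrix.diagonal_eq_diagonal_iff]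
    intro i
    exact hqeval μ i
  have hEblock : ∀ μ, ∀ i j, f i ≠ f j → E μ i j = 0 := by
    intro μ
    rw [← hEq μ]
    exact blockdiag_aeval hB _
  have hEsum : ∑ μ ∈ S, E μ = 1 := by
    have h1 : ∑ μ ∈ S, E μ
        = P * (∑ μ ∈ S, Matrix.diagonal fun i => if d i = μ then (1:ℂ) else 0) * P⁻¹ := by
      rw [Finset.mul_sum, Finset.sum_mul]
    have h2 : (∑ μ ∈ S, Matrix.diagonal fun i => if d i = μ then (1:ℂ) else 0) = 1 := by
      ext i j
      rw [Matrix.sum_apply]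
      by_cases h : i = j
      · subst h
        simp only [Matrix.diagonal_apply_eq]
        rw [Finset.sum_ite_eq S (d i) (fun _ => (1:ℂ)), if_pos (hdS i), Matrix.one_apply_eq]
      · simp [Matrix.diagonal_apply_ne _ h, Matrix.one_apply_ne h]
    rw [h1, h2, Matrix.mul_one, hPQ]
  have hBE : ∀ μ, B * E μ = μ • E μ := by
    intro μ
    rw [hBconj, hE]
    calc P * Matrix.diagonal d * P⁻¹ *
          (P * Matrix.diagonal (fun i => if d i = μ then 1 else 0) * P⁻¹)
        = P * Matrix.diagonal d * (P⁻¹ * P)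
            * (Matrix.diagonal (fun i => if d i = μ then 1 else 0) * P⁻¹) := by
          simp only [Matrix.mul_assoc]
      _ = P * (Matrix.diagonal d * Matrix.diagonal (fun i => if d i = μ then 1 else 0)) * P⁻¹ := by
          rw [hQP, Matrix.mul_one]
          simp only [Matrix.mul_assoc]
      _ = P * (μ • Matrix.diagonal (fun i => if d i = μ then 1 else 0)) * P⁻¹ := by
          refine congrArg (fun M => P * M * P⁻¹) ?_
          rw [Matrix.diagonal_mul_diagonal, ← Matrix.diagonal_smul,
            Matrix.diagonal_eq_diagonal_iff]
          intro i
          by_cases h : d i = μ <;> simp [h]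
      _ = μ • (P * Matrix.diagonal (fun i => if d i = μ then 1 else 0) * P⁻¹) := by
          rw [Matrix.mul_smul, Matrix.smul_mul]
  set T : Fin ℓ → Set (Fin n → ℂ) :=
    fun k => {w | w ∈ blockSub f k ∧ ∃ μ : ℂ, B.mulVec w = μ • w} with hT
  have hTspan : ∀ k, Submodule.span ℂ (T k) = blockSub f k := by
    intro k
    apply le_antisymm
    · rw [Submodule.span_le]
      exact fun w hw => hw.1
    · intro v hv
      have hv2 : v = ∑ μ ∈ S, (E μ).mulVec v := by
        have hsum : ∑ μ ∈ S, (E μ).mulVec v = (∑ μ ∈ S, E μ).mulVec v := by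
          funext i
          rw [Finset.sum_apply]
          simp only [Matrix.mulVec, dotProduct, Matrix.sum_apply, Finset.sum_mul]
          rw [Finset.sum_comm]
        rw [hsum, hEsum, Matrix.one_mulVec]
      rw [hv2]
      refine Submodule.sum_mem _ fun μ _ => Submodule.subset_span ?_
      refine ⟨?_, μ, by rw [Matrix.mulVec_mulVec, hBE, Matrix.smul_mulVec]⟩
      intro i hi
      simp only [Matrix.mulVec, dotProduct]
      refine Finset.sum_eq_zero fun j _ => ?_
      by_cases hj : f j = k
      · rw [hEblock μ i j (by rw [hj]; exact hi), zero_mul]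
      · rw [hv j hj, mul_zero]
  have hTex : ∀ k, ∃ t : Set (Fin n → ℂ), t ⊆ T k ∧ Submodule.span ℂ t = blockSub f k ∧
      LinearIndependent ℂ ((↑) : t → (Fin n → ℂ)) := by
    intro k
    obtain ⟨b, hb1, hb2, hb3⟩ := exists_linearIndependent ℂ (T k)
    exact ⟨b, hb1, by rw [hb2, hTspan k], hb3⟩
  choose t ht1 ht2 ht3 using hTex
  haveI : ∀ k, Fintype (t k) := fun k => ((ht3 k).setFinite).fintype
  have hInt := blockSub_isInternal f
  set bk : ∀ k, Module.Basis (t k) ℂ (blockSub f k) := fun k => spanBasis (ht3 k) (ht2 k) with hbk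
  set cb : Module.Basis (Σ k, t k) ℂ (Fin n → ℂ) := hInt.collectedBasis bk with hcb
  have hcard : Fintype.card (Σ k, t k) = n := by
    rw [← Module.finrank_eq_card_basis cb, Module.finrank_fintype_fun_eq_card, Fintype.card_fin]
  set e : (Σ k, t k) ≃ Fin n := Fintype.equivFinOfCardEq hcard with he
  set c : Module.Basis (Fin n) ℂ (Fin n → ℂ) := cb.reindex e with hc
  set g : Fin n → Fin ℓ := fun j => (e.symm j).1 with hg
  set W : Matrix (Fin n) (Fin n) ℂ := (Pi.basisFun ℂ (Fin n)).toMatrix c with hW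
  have hWc : ∀ i j, W i j = c j i := by
    intro i j
    rw [hW, Module.Basis.toMatrix_apply, Pi.basisFun_repr]
  have hWunit : IsUnit W := by
    haveI := (Pi.basisFun ℂ (Fin n)).invertibleToMatrix c
    exact isUnit_of_invertible W
  have hcvec : ∀ j, c j = ((e.symm j).2 : Fin n → ℂ) := by
    intro j
    have h1 : ⇑cb = fun a : Σ k, t k => ((bk a.1 a.2 : blockSub f a.1) : Fin n → ℂ) :=
      hInt.collectedBasis_coe bk
    rw [hc, Module.Basis.reindex_apply, h1]
    exact spanBasis_coe (ht3 _) (ht2 _) _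
  have hceig : ∀ j, ∃ μ : ℂ, B.mulVec (c j) = μ • c j := by
    intro j
    rw [hcvec j]
    exact (ht1 _ (e.symm j).2.2).2
  set μf : Fin n → ℂ := fun j => Classical.choose (hceig j) with hμf
  have hμspec : ∀ j, B.mulVec (c j) = μf j • c j := fun j => Classical.choose_spec (hceig j)
  have hBW : B * W = W * Matrix.diagonal μf := by
    ext i j
    rw [Matrix.mul_apply, Matrix.mul_diagonal]
    have h := congrFun (hμspec j) i
    simp only [Matrix.mulVec, dotProduct, Pi.smul_apply, smul_eq_mul] at h
    have h2 : ∀ x, W x j = c j x := fun x => hWc x j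
    simp only [h2]
    rw [h, mul_comm]
  have hWdet : IsUnit W.det := (Matrix.isUnit_iff_isUnit_det W).mp hWunit
  have hfinal : W⁻¹ * B * W = Matrix.diagonal μf := by
    rw [Matrix.mul_assoc, hBW, ← Matrix.mul_assoc, Matrix.nonsing_inv_mul W hWdet,
      Matrix.one_mul]
  refine ⟨W, g, hWunit, ?_, ?_, ?_⟩
  · intro i j hij
    rw [hfinal, Matrix.diagonal_apply_ne _ hij]
  · intro j i hfi
    rw [hWc, hcvec j]
    exact (ht1 _ (e.symm j).2.2).1 i hfi
  · intro k
    have h1 : (Finset.univ.filter fun j => g j = k).card = Fintype.card {j // g j = k} :=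
      (Fintype.card_subtype _).symm
    have h2 : Fintype.card {j // g j = k} = Fintype.card (t k) :=
      Fintype.card_congr
        ((Equiv.subtypeEquiv e.symm (fun j => Iff.rfl)).trans
          (sigmaFiberFstEquiv (β := fun k => t k) k))
    have h3 : Fintype.card (t k) = (Finset.univ.filter fun i => f i = k).card :=
      ((Module.finrank_eq_card_basis (bk k)).symm).trans (finrank_blockSub f k)
    rw [h1, h2, h3]
end

section
/- (Theorem 1, existence form.) Let A : ℝ → Matrix (Fin n) (Fin n) ℂ be a matrix flow with each A t hermitian ((A t)ᴴ = A t), and suppose there exist a unitary matrix U (Uᴴ * U = 1) and f : Fin n → Fin ℓ such that U * (A t) * Uᴴ is block-diagonal with respect to f for every t : ℝ. Then for every t_a : ℝ there exist a unitary matrix V and a function g : Fin n → Fin ℓ such that Vᴴ * (A t_a) * V is diagonal, Vᴴ * (A t) * V is block-diagonal with respect to g for every t : ℝ, and for each k : Fin ℓ the number of indices j with g j = k equals the number of indices i with f i = k. (The columns of an eigenvector matrix of one flow matrix A(t_a) can be chosen so that the same constant unitary similarity block-diagonalizes every flow matrix A(t).) -/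
open Matrix

/-- Per-matrix diagonalization of a hermitian matrix by a unitary. -/
lemma exists_unitary_diag {m : Type*} [Fintype m] [DecidableEq m]
    (C : Matrix m m ℂ) (hC : Cᴴ = C) :
    ∃ W : Matrix m m ℂ, Wᴴ * W = 1 ∧ ∀ i j, i ≠ j → (Wᴴ * C * W) i j = 0 := by
  have h : C.IsHermitian := hC
  refine ⟨(h.eigenvectorUnitary : Matrix m m ℂ), ?_, ?_⟩
  · have := (Matrix.mem_unitaryGroup_iff').mp h.eigenvectorUnitary.2
    simpa [star_eq_conjTranspose] using this
  · intro i j hij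
    have := Matrix.IsHermitian.conjStarAlgAut_star_eigenvectorUnitary h
    rw [Unitary.conjStarAlgAut_star_apply, star_eq_conjTranspose] at this
    rw [this]
    exact Matrix.diagonal_apply_ne _ hij

/-- Theorem 1 (existence form): for a hermitian matrix flow that is uniformly
block-diagonalized by a constant unitary similarity, the eigenvector matrix of any one
flow matrix `A t_a` can be chosen so that the same constant unitary similarity
block-diagonalizes every flow matrix `A t`. -/
theorem hermitian_flow_eigenvector_blockDiagonalizes
    {n ℓ : ℕ} (A : ℝ → Matrix (Fin n) (Fin n) ℂ)
    (hherm : ∀ t, (A t)ᴴ = A t)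
    (U : Matrix (Fin n) (Fin n) ℂ) (hU : Uᴴ * U = 1)
    (f : Fin n → Fin ℓ)
    (hblock : ∀ t, ∀ i j, f i ≠ f j → (U * A t * Uᴴ) i j = 0)
    (t_a : ℝ) :
    ∃ (V : Matrix (Fin n) (Fin n) ℂ) (g : Fin n → Fin ℓ),
      Vᴴ * V = 1 ∧
      (∀ i j, i ≠ j → (Vᴴ * A t_a * V) i j = 0) ∧
      (∀ t, ∀ i j, g i ≠ g j → (Vᴴ * A t * V) i j = 0) ∧
      (∀ k : Fin ℓ,
        (Finset.univ.filter fun j => g j = k).card =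
          (Finset.univ.filter fun i => f i = k).card) := by
  classical
  set B : ℝ → Matrix (Fin n) (Fin n) ℂ := fun t => U * A t * Uᴴ with hB
  have hBherm : ∀ t, (B t)ᴴ = B t := by
    intro t
    simp [hB, conjTranspose_mul, hherm t, mul_assoc]
  -- the submatrix of B t_a on block k
  have hCherm : ∀ k : Fin ℓ,
      ((B t_a).submatrix (fun x : {i // f i = k} => (x : Fin n))
        (fun x : {i // f i = k} => (x : Fin n)))ᴴ =
      (B t_a).submatrix (fun x : {i // f i = k} => (x : Fin n))
        (fun x : {i // f i = k} => (x : Fin n)) := by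
    intro k
    rw [conjTranspose_submatrix, hBherm]
  choose Wb hWb1 hWb2 using fun k => exists_unitary_diag _ (hCherm k)
  -- assemble the block-diagonal unitary W
  set W : Matrix (Fin n) (Fin n) ℂ :=
    fun i j => if h : f i = f j then Wb (f j) ⟨i, h⟩ ⟨j, rfl⟩ else 0 with hWdef
  have hW_eq : ∀ (k : Fin ℓ) (a b : Fin n) (ha : f a = k) (hb : f b = k),
      W a b = Wb k ⟨a, ha⟩ ⟨b, hb⟩ := by
    intro k a b ha hb
    subst hb
    simp only [hWdef]
    rw [dif_pos ha]
  have hW0 : ∀ a b, f a ≠ f b → W a b = 0 := by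
    intro a b hab
    simp only [hWdef]
    rw [dif_neg hab]
  -- sum restriction lemma
  have hsum : ∀ (k : Fin ℓ) (h : Fin n → ℂ), (∀ x, f x ≠ k → h x = 0) →
      ∑ x, h x = ∑ x : {i // f i = k}, h x := by
    intro k h hz
    rw [← Finset.sum_filter_of_ne (p := fun x => f x = k)
      (fun x _ hx => by by_contra hc; exact hx (hz x hc))]
    exact Finset.sum_subtype _ (fun x => by simp) h
  -- W is unitary
  have hWunit : Wᴴ * W = 1 := by
    ext i j
    rw [mul_apply]
    by_cases hij : f i = f j
    · have side : ∀ x, f x ≠ f j → Wᴴ i x * W x j = 0 := by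
        intro x hx
        rw [conjTranspose_apply, hW0 x i (fun hc => hx (hc.trans hij)), star_zero, zero_mul]
      rw [hsum (f j) _ side]
      have heq : ∀ x : {i' // f i' = f j}, Wᴴ i (x : Fin n) * W (x : Fin n) j =
          (Wb (f j))ᴴ ⟨i, hij⟩ x * Wb (f j) x ⟨j, rfl⟩ := by
        intro x
        rw [conjTranspose_apply, conjTranspose_apply,
          hW_eq (f j) (x : Fin n) i x.2 hij, hW_eq (f j) (x : Fin n) j x.2 rfl]
      rw [Finset.sum_congr rfl (fun x _ => heq x), ← mul_apply, hWb1]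
      by_cases h : i = j
      · subst h; simp
      · rw [Matrix.one_apply_ne h,
          Matrix.one_apply_ne (fun hc => h (congrArg Subtype.val hc))]
    · rw [Matrix.one_apply_ne (fun h => hij (congrArg f h))]
      apply Finset.sum_eq_zero
      intro x _
      by_cases hx : f x = f i
      · rw [hW0 x j (hx ▸ hij), mul_zero]
      · rw [conjTranspose_apply, hW0 x i hx, star_zero, zero_mul]
  have hWWH : W * Wᴴ = 1 := mul_eq_one_comm.mp hWunit
  have hUUH : U * Uᴴ = 1 := mul_eq_one_comm.mp hU
  -- key computation: entries of Wᴴ * B t * W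
  have hkey : ∀ (t : ℝ) (i j : Fin n), (Wᴴ * B t * W) i j =
      ∑ x, ∑ y, Wᴴ i x * B t x y * W y j := by
    intro t i j
    rw [mul_apply]
    simp_rw [mul_apply, Finset.sum_mul]
    exact Finset.sum_comm
  -- Wᴴ * B t * W is block-diagonal w.r.t. f
  have hWblock : ∀ t, ∀ i j, f i ≠ f j → (Wᴴ * B t * W) i j = 0 := by
    intro t i j hij
    rw [hkey]
    apply Finset.sum_eq_zero; intro x _
    apply Finset.sum_eq_zero; intro y _
    by_cases hx : f x = f i
    · by_cases hy : f y = f j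
      · rw [show B t x y = 0 from hblock t x y (by rw [hx, hy]; exact hij),
          mul_zero, zero_mul]
      · rw [hW0 y j hy, mul_zero]
    · rw [conjTranspose_apply, hW0 x i hx, star_zero, zero_mul, zero_mul]
  -- Wᴴ * B t_a * W is diagonal
  have hWdiag : ∀ i j, i ≠ j → (Wᴴ * B t_a * W) i j = 0 := by
    intro i j hij
    by_cases hfij : f i = f j
    · rw [hkey]
      have side : ∀ x, f x ≠ f j → (∑ y, Wᴴ i x * B t_a x y * W y j) = 0 := by
        intro x hx
        apply Finset.sum_eq_zero; intro y _
        rw [conjTranspose_apply, hW0 x i (fun h => hx (h.trans hfij)), star_zero,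
          zero_mul, zero_mul]
      rw [hsum (f j) _ side]
      have step : ∀ x : {i' // f i' = f j},
          ∑ y, Wᴴ i (x : Fin n) * B t_a (x : Fin n) y * W y j =
          ∑ y : {i' // f i' = f j},
            Wᴴ i (x : Fin n) * B t_a (x : Fin n) (y : Fin n) * W (y : Fin n) j := by
        intro x
        exact hsum (f j) _ (fun y hy => by rw [hW0 y j hy, mul_zero])
      rw [Finset.sum_congr rfl (fun x _ => step x)]
      have heq : ∀ (x y : {i' // f i' = f j}),
          Wᴴ i (x : Fin n) * B t_a (x : Fin n) (y : Fin n) * W (y : Fin n) j =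
          (Wb (f j))ᴴ ⟨i, hfij⟩ x *
            ((B t_a).submatrix (fun a : {i' // f i' = f j} => (a : Fin n))
              (fun a : {i' // f i' = f j} => (a : Fin n))) x y * Wb (f j) y ⟨j, rfl⟩ := by
        intro x y
        rw [conjTranspose_apply, conjTranspose_apply,
          hW_eq (f j) (x : Fin n) i x.2 hfij, hW_eq (f j) (y : Fin n) j y.2 rfl,
          Matrix.submatrix_apply]
      rw [Finset.sum_congr rfl (fun x _ => Finset.sum_congr rfl (fun y _ => heq x y))]
      have goal2 : ((Wb (f j))ᴴ *
          ((B t_a).submatrix (fun a : {i' // f i' = f j} => (a : Fin n))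
            (fun a : {i' // f i' = f j} => (a : Fin n))) * Wb (f j)) ⟨i, hfij⟩ ⟨j, rfl⟩ = 0 :=
        hWb2 (f j) _ _ (fun hc => hij (congrArg Subtype.val hc))
      rw [← goal2, mul_apply]
      simp_rw [mul_apply, Finset.sum_mul]
      exact Finset.sum_comm.symm
    · exact hWblock t_a i j hfij
  refine ⟨Uᴴ * W, f, ?_, ?_, ?_, fun k => rfl⟩
  · rw [conjTranspose_mul, conjTranspose_conjTranspose, mul_assoc, ← mul_assoc U, hUUH,
      one_mul, hWunit]
  · intro i j hij
    have : (Uᴴ * W)ᴴ * A t_a * (Uᴴ * W) = Wᴴ * B t_a * W := by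
      simp [hB, conjTranspose_mul, mul_assoc]
    rw [this]; exact hWdiag i j hij
  · intro t i j hij
    have : (Uᴴ * W)ᴴ * A t * (Uᴴ * W) = Wᴴ * B t * W := by
      simp [hB, conjTranspose_mul, mul_assoc]
    rw [this]; exact hWblock t i j hij
end

section
/- (Theorem 2, existence form.) Let A : ℝ → Matrix (Fin n) (Fin n) ℂ be a matrix flow, and suppose there exist an invertible matrix C and f : Fin n → Fin ℓ such that C * (A t) * C⁻¹ is block-diagonal with respect to f for every t : ℝ. Fix t_a : ℝ and assume A t_a is diagonalizable (there exists an invertible matrix P with P⁻¹ * (A t_a) * P diagonal). Then there exist an invertible matrix W and a function g : Fin n → Fin ℓ such that W⁻¹ * (A t_a) * W is diagonal, W⁻¹ * (A t) * W is block-diagonal with respect to g for every t : ℝ, and for each k : Fin ℓ the number of indices j with g j = k equals the number of indices i with f i = k. -/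
open Matrix

/-- Products of block-diagonal matrices are block-diagonal. -/
lemma blk_mul {n ℓ : ℕ} (f : Fin n → Fin ℓ) (X Y : Matrix (Fin n) (Fin n) ℂ)
    (hX : ∀ i j, f i ≠ f j → X i j = 0) (hY : ∀ i j, f i ≠ f j → Y i j = 0) :
    ∀ i j, f i ≠ f j → (X * Y) i j = 0 := by
  intro i j h
  rw [Matrix.mul_apply]
  apply Finset.sum_eq_zero
  intro m _
  by_cases hm : f i = f m
  · rw [hY m j (fun hmj => h (hm.trans hmj)), mul_zero]
  · rw [hX i m hm, zero_mul]

/-- The inverse of an invertible block-diagonal matrix is block-diagonal. -/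
lemma blk_inv {n ℓ : ℕ} (f : Fin n → Fin ℓ) (Q : Matrix (Fin n) (Fin n) ℂ)
    (hQ : IsUnit Q) (h : ∀ i j, f i ≠ f j → Q i j = 0) :
    ∀ i j, f i ≠ f j → Q⁻¹ i j = 0 := by
  intro i j hij
  have hdet : IsUnit Q.det := (Matrix.isUnit_iff_isUnit_det Q).mp hQ
  have hQQ : Q * Q⁻¹ = 1 := Matrix.mul_nonsing_inv _ hdet
  have hQQ' : Q⁻¹ * Q = 1 := Matrix.nonsing_inv_mul _ hdet
  set Pk : Matrix (Fin n) (Fin n) ℂ :=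
    Matrix.diagonal (fun m => if f m = f j then (1:ℂ) else 0) with hPk
  have comm : Q * Pk = Pk * Q := by
    ext a b
    rw [hPk, Matrix.mul_diagonal, Matrix.diagonal_mul]
    by_cases hab : f a = f b
    · rw [hab]; ring
    · rw [h a b hab]; ring
  have comm' : Q⁻¹ * Pk = Pk * Q⁻¹ := by
    calc Q⁻¹ * Pk = Q⁻¹ * Pk * (Q * Q⁻¹) := by rw [hQQ, Matrix.mul_one]
    _ = Q⁻¹ * (Pk * Q) * Q⁻¹ := by noncomm_ring
    _ = Q⁻¹ * (Q * Pk) * Q⁻¹ := by rw [comm]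
    _ = Pk * Q⁻¹ := by rw [← Matrix.mul_assoc Q⁻¹ Q Pk, hQQ', Matrix.one_mul]
  have h1 := congrFun (congrFun comm' i) j
  rw [hPk, Matrix.mul_diagonal, Matrix.diagonal_mul, if_pos rfl, if_neg hij] at h1
  simpa using h1

/-- A diagonalizable block-diagonal matrix can be diagonalized by a block-diagonal
invertible matrix. -/
lemma exists_blockdiag_diagonalizer {n ℓ : ℕ} (f : Fin n → Fin ℓ)
    (M : Matrix (Fin n) (Fin n) ℂ)
    (hM : ∀ i j, f i ≠ f j → M i j = 0)
    (P : Matrix (Fin n) (Fin n) ℂ) (hP : IsUnit P)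
    (hDdiag : ∀ i j, i ≠ j → (P⁻¹ * M * P) i j = 0) :
    ∃ Q : Matrix (Fin n) (Fin n) ℂ, IsUnit Q ∧
      (∀ i j, f i ≠ f j → Q i j = 0) ∧
      (∀ i j, i ≠ j → (Q⁻¹ * M * Q) i j = 0) := by
  classical
  have hPdet : IsUnit P.det := (Matrix.isUnit_iff_isUnit_det P).mp hP
  have hPP : P * P⁻¹ = 1 := Matrix.mul_nonsing_inv _ hPdet
  have hPP' : P⁻¹ * P = 1 := Matrix.nonsing_inv_mul _ hPdet
  set D : Matrix (Fin n) (Fin n) ℂ := P⁻¹ * M * P with hD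
  have hMP : M * P = P * D := by
    rw [hD]
    calc M * P = (P * P⁻¹) * (M * P) := by rw [hPP, Matrix.one_mul]
    _ = P * (P⁻¹ * M * P) := by noncomm_ring
  -- eigenvector columns
  have hcol : ∀ j i, ∑ m, M i m * P m j = D j j * P i j := by
    intro j i
    have h1 := congrFun (congrFun hMP i) j
    rw [Matrix.mul_apply, Matrix.mul_apply] at h1
    rw [h1, Finset.sum_eq_single j]
    · ring
    · intro b _ hbj; rw [hDdiag b j hbj]; ring
    · intro hj; exact absurd (Finset.mem_univ j) hj
  -- the truncated eigenvector family
  set u : Fin ℓ × Fin n → (Fin n → ℂ) :=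
    fun p i => if f i = p.1 then P i p.2 else 0 with hu
  have hueig : ∀ p : Fin ℓ × Fin n, M *ᵥ u p = D p.2 p.2 • u p := by
    rintro ⟨k, j⟩
    funext i
    simp only [hu, Matrix.mulVec, dotProduct, Pi.smul_apply, smul_eq_mul]
    by_cases hik : f i = k
    · have hterm : ∀ m ∈ Finset.univ, M i m * (if f m = k then P m j else 0) = M i m * P m j := by
        intro m _
        by_cases hmk : f m = k
        · rw [if_pos hmk]
        · rw [if_neg hmk, hM i m (fun hc => hmk (hc ▸ hik)), mul_zero, zero_mul]
      rw [Finset.sum_congr rfl hterm, hcol j i, if_pos hik]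
    · have hterm : ∀ m ∈ Finset.univ, M i m * (if f m = k then P m j else 0) = 0 := by
        intro m _
        by_cases hmk : f m = k
        · rw [hM i m (fun hc => hik (hc.symm ▸ hmk)), zero_mul]
        · rw [if_neg hmk, mul_zero]
      rw [Finset.sum_eq_zero hterm, if_neg hik, mul_zero]
  have husupp : ∀ p : Fin ℓ × Fin n, ∀ i, f i ≠ p.1 → u p i = 0 := by
    intro p i hi
    simp only [hu, if_neg hi]
  -- spanning
  have hspan : Submodule.span ℂ (Set.range u) = ⊤ := by
    rw [eq_top_iff]
    rintro v -
    have hv : v = P *ᵥ (P⁻¹ *ᵥ v) := by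
      rw [Matrix.mulVec_mulVec, hPP, Matrix.one_mulVec]
    have hv2 : v = ∑ j, (P⁻¹ *ᵥ v) j • (∑ k, u (k, j)) := by
      conv_lhs => rw [hv]
      funext i
      rw [Matrix.mulVec, dotProduct, Finset.sum_apply]
      apply Finset.sum_congr rfl
      intro j _
      simp only [Pi.smul_apply, Finset.sum_apply, smul_eq_mul, hu]
      rw [Finset.sum_ite_eq (Finset.univ) (f i) (fun _ => P i j), if_pos (Finset.mem_univ _)]
      ring
    rw [hv2]
    refine Submodule.sum_mem _ (fun j _ => Submodule.smul_mem _ _ (Submodule.sum_mem _ (fun k _ => ?_)))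
    exact Submodule.subset_span ⟨(k, j), rfl⟩
  obtain ⟨s, hsub, hspan_s, hli⟩ := exists_linearIndependent ℂ (Set.range u)
  rw [hspan] at hspan_s
  haveI : Fintype s := ((Set.finite_range u).subset hsub).fintype
  let b : Module.Basis s ℂ (Fin n → ℂ) :=
    Module.Basis.mk hli (by rw [Subtype.range_coe, hspan_s])
  have hcards : Fintype.card s = n := by
    have h1 := Module.finrank_eq_card_basis b
    rw [Module.finrank_fin_fun] at h1
    exact h1.symm
  -- block and eigenvalue of each chosen vector
  have hmem : ∀ v : s, ∃ p : Fin ℓ × Fin n, u p = (v : Fin n → ℂ) := fun v => hsub v.2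
  set pick : s → Fin ℓ × Fin n := fun v => Classical.choose (hmem v) with hpick
  set blk : s → Fin ℓ := fun v => (pick v).1 with hblk
  have hsupp : ∀ v : s, ∀ i, f i ≠ blk v → (v : Fin n → ℂ) i = 0 := by
    intro v i hi
    rw [← Classical.choose_spec (hmem v)]
    exact husupp _ i hi
  have heig : ∀ v : s, M *ᵥ (v : Fin n → ℂ) =
      D (pick v).2 (pick v).2 • (v : Fin n → ℂ) := by
    intro v
    rw [← Classical.choose_spec (hmem v)]
    exact hueig _
  -- counting
  set d : Fin ℓ → ℕ := fun k => (Finset.univ.filter fun i => f i = k).card with hdd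
  set c : Fin ℓ → ℕ := fun k => Fintype.card {v : s // blk v = k} with hcc
  have hsum_c : ∑ k, c k = Fintype.card s := by
    rw [← Fintype.card_sigma]
    exact Fintype.card_congr (Equiv.sigmaFiberEquiv blk)
  have hsum_d : ∑ k, d k = n := by
    have : ∑ k, Fintype.card {i : Fin n // f i = k} = Fintype.card (Fin n) := by
      rw [← Fintype.card_sigma]
      exact Fintype.card_congr (Equiv.sigmaFiberEquiv f)
    rw [Fintype.card_fin] at this
    rw [← this]
    apply Finset.sum_congr rfl
    intro k _
    rw [hdd, Fintype.card_subtype]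
  have hle : ∀ k, c k ≤ d k := by
    intro k
    set T : Finset (Fin n → ℂ) :=
      (Finset.univ.filter fun i => f i = k).image (fun i => Pi.single i (1:ℂ)) with hT
    set Wk : Submodule ℂ (Fin n → ℂ) := Submodule.span ℂ (T : Set (Fin n → ℂ)) with hWk
    have hWkrank : Module.finrank ℂ Wk ≤ d k :=
      le_trans (finrank_span_finset_le_card T) Finset.card_image_le
    have hmemW : ∀ v : s, blk v = k → (v : Fin n → ℂ) ∈ Wk := by
      intro v hv
      have hrep : (v : Fin n → ℂ) =
          ∑ i ∈ Finset.univ.filter (fun i => f i = k),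
            (v : Fin n → ℂ) i • (Pi.single i 1 : Fin n → ℂ) := by
        funext x
        rw [Finset.sum_apply]
        by_cases hx : f x = k
        · rw [Finset.sum_eq_single x]
          · simp
          · intro i _ hix
            simp only [Pi.smul_apply, smul_eq_mul, Pi.single_apply]
            rw [if_neg (Ne.symm hix), mul_zero]
          · intro hxmem
            exact absurd (Finset.mem_filter.mpr ⟨Finset.mem_univ x, hx⟩) hxmem
        · rw [hsupp v x (fun hc => hx (hv ▸ hc))]
          symm
          apply Finset.sum_eq_zero
          intro i hi
          have hfi : f i = k := (Finset.mem_filter.mp hi).2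
          simp only [Pi.smul_apply, smul_eq_mul, Pi.single_apply]
          rw [if_neg (fun hxi : x = i => hx (hxi ▸ hfi)), mul_zero]
      rw [hrep]
      exact Submodule.sum_mem _ (fun i hi => Submodule.smul_mem _ _
        (Submodule.subset_span (Finset.mem_image_of_mem _ hi)))
    set F : {v : s // blk v = k} → Wk := fun v => ⟨(v.1 : Fin n → ℂ), hmemW v.1 v.2⟩ with hF
    have hFli : LinearIndependent ℂ F := by
      have h1 : LinearIndependent ℂ (fun v : {v : s // blk v = k} => ((v.1 : Fin n → ℂ))) :=
        hli.comp Subtype.val Subtype.val_injective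
      exact h1.of_comp Wk.subtype
    calc c k ≤ Module.finrank ℂ Wk := hFli.fintype_card_le_finrank
    _ ≤ d k := hWkrank
  have hceq : ∀ k, c k = d k := by
    have hsums : ∑ k, c k = ∑ k, d k := by rw [hsum_c, hcards, hsum_d]
    have := (Finset.sum_eq_sum_iff_of_le (fun k _ => hle k)).mp hsums
    exact fun k => this k (Finset.mem_univ k)
  -- the index bijection
  have hcard_fiber : ∀ k, Fintype.card {i : Fin n // f i = k} = Fintype.card {v : s // blk v = k} := by
    intro k
    rw [Fintype.card_subtype]
    exact (hceq k).symm
  set eqv : ∀ k, {i : Fin n // f i = k} ≃ {v : s // blk v = k} :=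
    fun k => Fintype.equivOfCardEq (hcard_fiber k) with heqv
  set e : Fin n ≃ s :=
    (Equiv.sigmaFiberEquiv f).symm.trans
      ((Equiv.sigmaCongrRight eqv).trans (Equiv.sigmaFiberEquiv blk)) with he
  have hblk_e : ∀ j, blk (e j) = f j := by
    intro j
    have h1 : e j = ((eqv (f j)) ⟨j, rfl⟩ : {v : s // blk v = f j}).1 := rfl
    rw [h1]
    exact ((eqv (f j)) ⟨j, rfl⟩).2
  -- the matrix Q
  set b' : Module.Basis (Fin n) ℂ (Fin n → ℂ) := b.reindex e.symm with hb'
  have hb'app : ∀ j, b' j = ((e j : s) : Fin n → ℂ) := by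
    intro j
    rw [hb', Module.Basis.reindex_apply, Equiv.symm_symm]
    exact Module.Basis.mk_apply _ _ _
  set Q : Matrix (Fin n) (Fin n) ℂ := (Pi.basisFun ℂ (Fin n)).toMatrix b' with hQ
  have hQentry : ∀ i j, Q i j = ((e j : s) : Fin n → ℂ) i := by
    intro i j
    rw [hQ, Module.Basis.toMatrix_apply, hb'app, Pi.basisFun_repr]
  have hQunit : IsUnit Q := by
    have := (Pi.basisFun ℂ (Fin n)).invertibleToMatrix b'
    exact isUnit_of_invertible Q
  have hQblk : ∀ i j, f i ≠ f j → Q i j = 0 := by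
    intro i j hij
    rw [hQentry]
    exact hsupp (e j) i (fun hc => hij (hc.trans (hblk_e j)))
  set μ : Fin n → ℂ := fun j => D (pick (e j)).2 (pick (e j)).2 with hμ
  have hMQ : M * Q = Q * Matrix.diagonal μ := by
    ext i j
    rw [Matrix.mul_diagonal, Matrix.mul_apply]
    have h1 := congrFun (heig (e j)) i
    simp only [Matrix.mulVec, dotProduct, Pi.smul_apply, smul_eq_mul] at h1
    calc ∑ m, M i m * Q m j = ∑ m, M i m * ((e j : s) : Fin n → ℂ) m := by
          apply Finset.sum_congr rfl; intro m _; rw [hQentry]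
    _ = D (pick (e j)).2 (pick (e j)).2 * ((e j : s) : Fin n → ℂ) i := h1
    _ = Q i j * μ j := by rw [hQentry, hμ]; ring
  have hQdet : IsUnit Q.det := (Matrix.isUnit_iff_isUnit_det Q).mp hQunit
  have hfinal : Q⁻¹ * M * Q = Matrix.diagonal μ := by
    calc Q⁻¹ * M * Q = Q⁻¹ * (M * Q) := by rw [Matrix.mul_assoc]
    _ = Q⁻¹ * (Q * Matrix.diagonal μ) := by rw [hMQ]
    _ = Q⁻¹ * Q * Matrix.diagonal μ := by rw [Matrix.mul_assoc]
    _ = Matrix.diagonal μ := by rw [Matrix.nonsing_inv_mul _ hQdet, Matrix.one_mul]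
  refine ⟨Q, hQunit, hQblk, ?_⟩
  intro i j hij
  rw [hfinal]
  exact Matrix.diagonal_apply_ne _ hij

/-- Theorem 2 (existence form): for a general flow uniformly block-diagonalized by a
constant similarity, with `A t_a` diagonalizable, there is an eigenvector matrix of
`A t_a` that block-diagonalizes every flow matrix. -/
theorem general_flow_eigenvector_blockDiagonalizes
    {n ℓ : ℕ} (A : ℝ → Matrix (Fin n) (Fin n) ℂ)
    (C : Matrix (Fin n) (Fin n) ℂ) (hC : IsUnit C)
    (f : Fin n → Fin ℓ)
    (hblock : ∀ t, ∀ i j, f i ≠ f j → (C * A t * C⁻¹) i j = 0)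
    (t_a : ℝ)
    (hdiag : ∃ P : Matrix (Fin n) (Fin n) ℂ, IsUnit P ∧
      ∀ i j, i ≠ j → (P⁻¹ * A t_a * P) i j = 0) :
    ∃ (W : Matrix (Fin n) (Fin n) ℂ) (g : Fin n → Fin ℓ),
      IsUnit W ∧
      (∀ i j, i ≠ j → (W⁻¹ * A t_a * W) i j = 0) ∧
      (∀ t, ∀ i j, g i ≠ g j → (W⁻¹ * A t * W) i j = 0) ∧
      (∀ k : Fin ℓ,
        (Finset.univ.filter fun j => g j = k).card =
          (Finset.univ.filter fun i => f i = k).card) := by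
  classical
  obtain ⟨P, hP, hPdiag⟩ := hdiag
  have hCdet : IsUnit C.det := (Matrix.isUnit_iff_isUnit_det C).mp hC
  have hCC : C * C⁻¹ = 1 := Matrix.mul_nonsing_inv _ hCdet
  have hCC' : C⁻¹ * C = 1 := Matrix.nonsing_inv_mul _ hCdet
  set M : Matrix (Fin n) (Fin n) ℂ := C * A t_a * C⁻¹ with hMdef
  have hMblk : ∀ i j, f i ≠ f j → M i j = 0 := hblock t_a
  -- M is diagonalizable via C * P
  have hPdet : IsUnit P.det := (Matrix.isUnit_iff_isUnit_det P).mp hP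
  set P' : Matrix (Fin n) (Fin n) ℂ := C * P with hP'def
  have hP'unit : IsUnit P' := hC.mul hP
  have hP'inv : P'⁻¹ = P⁻¹ * C⁻¹ := by rw [hP'def, Matrix.mul_inv_rev]
  have hP'diag : ∀ i j, i ≠ j → (P'⁻¹ * M * P') i j = 0 := by
    have : P'⁻¹ * M * P' = P⁻¹ * A t_a * P := by
      rw [hP'inv, hMdef, hP'def]
      calc P⁻¹ * C⁻¹ * (C * A t_a * C⁻¹) * (C * P)
          = P⁻¹ * (C⁻¹ * C) * A t_a * (C⁻¹ * C) * P := by noncomm_ring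
      _ = P⁻¹ * A t_a * P := by rw [hCC']; noncomm_ring
    rw [this]
    exact hPdiag
  obtain ⟨Q, hQunit, hQblk, hQdiag⟩ := exists_blockdiag_diagonalizer f M hMblk P' hP'unit hP'diag
  have hQdet : IsUnit Q.det := (Matrix.isUnit_iff_isUnit_det Q).mp hQunit
  have hQinvblk : ∀ i j, f i ≠ f j → Q⁻¹ i j = 0 := blk_inv f Q hQunit hQblk
  set W : Matrix (Fin n) (Fin n) ℂ := C⁻¹ * Q with hWdef
  have hWunit : IsUnit W := by
    have : IsUnit C⁻¹ := ⟨⟨C⁻¹, C, hCC', hCC⟩, rfl⟩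
    exact this.mul hQunit
  have hWinv : W⁻¹ = Q⁻¹ * C := by
    rw [hWdef, Matrix.mul_inv_rev, Matrix.nonsing_inv_nonsing_inv _ hCdet]
  have hconj : ∀ t, W⁻¹ * A t * W = Q⁻¹ * (C * A t * C⁻¹) * Q := by
    intro t
    rw [hWinv, hWdef]
    noncomm_ring
  refine ⟨W, f, hWunit, ?_, ?_, fun k => rfl⟩
  · intro i j hij
    rw [hconj t_a]
    exact hQdiag i j hij
  · intro t i j hij
    rw [hconj t]
    exact blk_mul f _ Q (blk_mul f Q⁻¹ _ hQinvblk (hblock t)) hQblk i j hij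
end
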